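/- arXiv:2512.14983 — 4 statements merged into one kernel-verified Lean document; each statement's English description precedes it below -/
import Mathlib

section
/- Let X ~ Poisson(λ) with λ > 0. Then the Gini coefficient of X equals exp(-2λ)[I₀(2λ) + I₁(2λ)], where I₀ and I₁ are the modified Bessel functions of the first kind. -/
open MeasureTheory

noncomputable def pb (x : ℝ) (d : ℕ) : ℝ :=
  ∑' k : ℕ, x ^ (2*k + d) / (Nat.factorial k * Nat.factorial (k+d))

lemma pb_term_nonneg {x : ℝ} (hx : 0 ≤ x) (d k : ℕ) :
    0 ≤ x ^ (2*k + d) / (Nat.factorial k * Nat.factorial (k+d)) := by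
  positivity

lemma pb_term_le {x : ℝ} (hx : 0 ≤ x) (d k : ℕ) :
    x ^ (2*k + d) / (Nat.factorial k * Nat.factorial (k+d))
      ≤ x ^ d / Nat.factorial d * ((x^2) ^ k / Nat.factorial k) := by
  have h1 : (Nat.factorial k * Nat.factorial d : ℝ) ≤ Nat.factorial (k+d) := by
    exact_mod_cast Nat.le_of_dvd (Nat.factorial_pos _)
      (Nat.factorial_mul_factorial_dvd_factorial_add k d)
  have h2 : (Nat.factorial k * (Nat.factorial k * Nat.factorial d) : ℝ)
      ≤ Nat.factorial k * Nat.factorial (k+d) := by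
    have : (0:ℝ) < Nat.factorial k := by positivity
    nlinarith
  have hx2 : x ^ (2*k+d) = x ^ d * (x^2)^k := by
    rw [← pow_mul, ← pow_add]; ring_nf
  rw [hx2, div_mul_div_comm]
  have hden : (Nat.factorial d * Nat.factorial k : ℝ) ≤ Nat.factorial k * Nat.factorial (k+d) := by
    rw [mul_comm]
    have : (Nat.factorial d : ℝ) ≤ Nat.factorial (k+d) := by
      exact_mod_cast Nat.factorial_le (Nat.le_add_left d k)
    have h0 : (0:ℝ) < Nat.factorial k := by positivity
    nlinarith
  gcongr

lemma summable_pb {x : ℝ} (hx : 0 ≤ x) (d : ℕ) :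
    Summable (fun k : ℕ => x ^ (2*k + d) / (Nat.factorial k * Nat.factorial (k+d))) := by
  apply Summable.of_nonneg_of_le (pb_term_nonneg hx d) (pb_term_le hx d)
  exact ((Real.summable_pow_div_factorial (x^2)).mul_left _)

lemma pb_nonneg {x : ℝ} (hx : 0 ≤ x) (d : ℕ) : 0 ≤ pb x d :=
  tsum_nonneg (pb_term_nonneg hx d)

lemma pb_le {x : ℝ} (hx : 0 ≤ x) (d : ℕ) :
    pb x d ≤ x ^ d / Nat.factorial d * ∑' k : ℕ, (x^2)^k / Nat.factorial k := by
  rw [pb, ← tsum_mul_left]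
  exact Summable.tsum_le_tsum (pb_term_le hx d) (summable_pb hx d)
    (((Real.summable_pow_div_factorial (x^2))).mul_left _)

lemma pb_rec {x : ℝ} (hx : 0 ≤ x) (d : ℕ) :
    ((d:ℝ)+1) * pb x (d+1) + x * pb x (d+2) = x * pb x d := by
  set T : ℕ → ℕ → ℝ := fun e k => x ^ (2*k + e) / (Nat.factorial k * Nat.factorial (k+e))
    with hT
  set g : ℕ → ℝ := fun k => (k:ℝ) * T (d+1) k with hg
  have hgs : ∀ k : ℕ, g (k+1) = x * T (d+2) k := by
    intro k
    simp only [hg, hT]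
    have h1 : Nat.factorial (k+1) = (k+1) * Nat.factorial k := Nat.factorial_succ k
    have h2 : k + 1 + (d+1) = k + (d+2) := by ring
    have h3 : 2*(k+1) + (d+1) = (2*k + (d+2)) + 1 := by ring
    rw [h1, h2, h3, pow_succ]
    have hk : (0:ℝ) < Nat.factorial k := by positivity
    have hkd : (0:ℝ) < Nat.factorial (k + (d+2)) := by positivity
    push_cast
    field_simp
  have hsg1 : Summable (fun k : ℕ => g (k+1)) := by
    simp only [hgs]; exact (summable_pb hx (d+2)).mul_left x
  have hsg : Summable g := (summable_nat_add_iff 1).mp hsg1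
  have hstep1 : x * pb x (d+2) = ∑' k : ℕ, g k := by
    have e0 : x * pb x (d+2) = ∑' k : ℕ, x * T (d+2) k := by rw [tsum_mul_left]; rfl
    rw [e0, Summable.tsum_eq_zero_add hsg, (show g 0 = 0 by simp [hg]), zero_add]
    exact tsum_congr fun k => (hgs k).symm
  have hsf : Summable (fun k : ℕ => ((d:ℝ)+1) * T (d+1) k) :=
    (summable_pb hx (d+1)).mul_left _
  have e1 : ((d:ℝ)+1) * pb x (d+1) = ∑' k : ℕ, ((d:ℝ)+1) * T (d+1) k := by
    rw [tsum_mul_left]; rfl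
  have e2 : x * pb x d = ∑' k : ℕ, x * T d k := by rw [tsum_mul_left]; rfl
  rw [e1, hstep1, e2, ← Summable.tsum_add hsf hsg]
  apply tsum_congr
  intro k
  simp only [hg, hT]
  have h4 : Nat.factorial (k + (d+1)) = (k+d+1) * Nat.factorial (k+d) := by
    have : k + (d+1) = (k+d) + 1 := by ring
    rw [this, Nat.factorial_succ]
  have h5 : 2*k + (d+1) = (2*k+d) + 1 := by ring
  have h6 : k + (d+1) = k + d + 1 := by ring
  rw [h4, h5, pow_succ]
  have hk : (0:ℝ) < Nat.factorial k := by positivity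
  have hkd : (0:ℝ) < Nat.factorial (k+d) := by positivity
  have hkd1 : (0:ℝ) < (k:ℝ)+d+1 := by positivity
  push_cast
  field_simp
  ring

lemma pb_partial {x : ℝ} (hx : 0 ≤ x) (n : ℕ) :
    ∑ d ∈ Finset.range (n+2), (d:ℝ) * pb x d
      = x * (pb x 0 + pb x 1 - pb x (n+1) - pb x (n+2)) := by
  induction n with
  | zero =>
      have h := pb_rec hx 0
      simp [Finset.sum_range_succ] at h ⊢
      linarith
  | succ n ih =>
      rw [Finset.sum_range_succ, ih]
      have h := pb_rec hx (n+1)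
      push_cast at h ⊢
      linarith

lemma pb_tendsto_zero {x : ℝ} (hx : 0 ≤ x) :
    Filter.Tendsto (fun n => pb x n) Filter.atTop (nhds 0) := by
  have hC : Filter.Tendsto
      (fun n : ℕ => x ^ n / Nat.factorial n * ∑' k : ℕ, (x^2)^k / Nat.factorial k)
      Filter.atTop (nhds 0) := by
    have := (Real.summable_pow_div_factorial x).tendsto_atTop_zero
    simpa using this.mul_const (∑' k : ℕ, (x^2)^k / Nat.factorial k)
  exact squeeze_zero (fun n => pb_nonneg hx n) (fun n => pb_le hx n) hC

lemma summable_d_pb {x : ℝ} (hx : 0 ≤ x) :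
    Summable (fun d : ℕ => (d:ℝ) * pb x d) := by
  apply summable_of_sum_range_le (c := x * (pb x 0 + pb x 1))
  · intro d
    have := pb_nonneg hx d
    positivity
  · intro n
    have h0 : 0 ≤ x * (pb x 0 + pb x 1) := by
      have := pb_nonneg hx 0
      have := pb_nonneg hx 1
      positivity
    match n with
    | 0 => simpa using h0
    | 1 => simpa [Finset.sum_range_succ] using h0
    | n+2 =>
        rw [pb_partial hx n]
        have h1 := pb_nonneg hx (n+1)
        have h2 := pb_nonneg hx (n+2)
        nlinarith [pb_nonneg hx 0, pb_nonneg hx 1]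

lemma tsum_d_pb {x : ℝ} (hx : 0 ≤ x) :
    ∑' d : ℕ, (d:ℝ) * pb x d = x * (pb x 0 + pb x 1) := by
  have hs := summable_d_pb hx
  have h1 := hs.hasSum.tendsto_sum_nat
  have h2 : Filter.Tendsto (fun n => ∑ d ∈ Finset.range n, (d:ℝ) * pb x d)
      Filter.atTop (nhds (x * (pb x 0 + pb x 1))) := by
    rw [← Filter.tendsto_add_atTop_iff_nat 2]
    have : (fun n => ∑ d ∈ Finset.range (n+2), (d:ℝ) * pb x d)
        = fun n => x * (pb x 0 + pb x 1 - pb x (n+1) - pb x (n+2)) := by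
      funext n; exact pb_partial hx n
    rw [this]
    have t1 : Filter.Tendsto (fun n : ℕ => pb x (n+1)) Filter.atTop (nhds 0) :=
      (pb_tendsto_zero hx).comp (Filter.tendsto_add_atTop_nat 1)
    have t2 : Filter.Tendsto (fun n : ℕ => pb x (n+2)) Filter.atTop (nhds 0) :=
      (pb_tendsto_zero hx).comp (Filter.tendsto_add_atTop_nat 2)
    have := (((tendsto_const_nhds (x := (pb x 0 + pb x 1))).sub t1).sub t2).const_mul x
    simpa using this
  exact tendsto_nhds_unique h1 h2

lemma enn_key (A : ℕ → ENNReal) :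
    ∑' p : ℕ × ℕ, (((p.1 - p.2) + (p.2 - p.1) : ℕ) : ENNReal) * (A p.1 * A p.2)
      = 2 * ∑' d : ℕ, (d : ENNReal) * ∑' k : ℕ, A (k + d) * A k := by
  rw [ENNReal.tsum_prod (f := fun j k => (((j - k) + (k - j) : ℕ) : ENNReal) * (A j * A k))]
  have split : (∑' (j : ℕ) (k : ℕ), (((j - k) + (k - j) : ℕ) : ENNReal) * (A j * A k))
      = (∑' (j : ℕ) (k : ℕ), ((j - k : ℕ) : ENNReal) * (A j * A k))
        + ∑' (j : ℕ) (k : ℕ), ((k - j : ℕ) : ENNReal) * (A j * A k) := by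
    rw [← ENNReal.tsum_add]
    apply tsum_congr; intro j
    rw [← ENNReal.tsum_add]
    apply tsum_congr; intro k
    push_cast
    ring
  have symm : (∑' (j : ℕ) (k : ℕ), ((k - j : ℕ) : ENNReal) * (A j * A k))
      = ∑' (j : ℕ) (k : ℕ), ((j - k : ℕ) : ENNReal) * (A j * A k) := by
    rw [ENNReal.tsum_comm]
    exact tsum_congr fun j => tsum_congr fun k => by rw [mul_comm (A k) (A j)]
  rw [split, symm, ← two_mul]
  congr 1
  have reidx : ∀ k : ℕ, (∑' j : ℕ, ((j - k : ℕ) : ENNReal) * (A j * A k))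
      = ∑' d : ℕ, (d : ENNReal) * (A (k + d) * A k) := by
    intro k
    have h1 : (∑' j : ℕ, ((j - k : ℕ) : ENNReal) * (A j * A k))
        = ∑' d : ℕ, (((k + d) - k : ℕ) : ENNReal) * (A (k + d) * A k) := by
      refine (Function.Injective.tsum_eq (g := fun d => k + d) ?_ ?_).symm
      · exact fun a b h => Nat.add_left_cancel h
      · intro j hj
        rcases le_or_gt j k with h | h
        · exfalso; apply hj; simp [Nat.sub_eq_zero_of_le h]
        · exact ⟨j - k, by show k + (j - k) = j; omega⟩
    rw [h1]
    apply tsum_congr; intro d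
    rw [Nat.add_sub_cancel_left]
  calc (∑' (j : ℕ) (k : ℕ), ((j - k : ℕ) : ENNReal) * (A j * A k))
      = ∑' (k : ℕ) (j : ℕ), ((j - k : ℕ) : ENNReal) * (A j * A k) := ENNReal.tsum_comm
    _ = ∑' (k : ℕ) (d : ℕ), (d : ENNReal) * (A (k + d) * A k) := tsum_congr reidx
    _ = ∑' (d : ℕ) (k : ℕ), (d : ENNReal) * (A (k + d) * A k) := ENNReal.tsum_comm
    _ = ∑' d : ℕ, (d : ENNReal) * ∑' k : ℕ, A (k + d) * A k :=
        tsum_congr fun d => ENNReal.tsum_mul_left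

lemma besselI_eq_pb' (ν : ℕ) (x : ℝ) :
    (∑' m : ℕ, (2*x / 2) ^ (2 * m + ν) / ((Nat.factorial m) * Real.Gamma (m + ν + 1)))
      = ∑' k : ℕ, x ^ (2*k + ν) / (Nat.factorial k * Nat.factorial (k+ν)) := by
  apply tsum_congr; intro m
  rw [show 2*x/2 = x by ring]
  congr 1
  rw [show ((m:ℝ) + ν + 1) = ((m + ν : ℕ) : ℝ) + 1 by push_cast; ring,
    Real.Gamma_nat_eq_factorial]


/-- Modified Bessel function of the first kind of (natural) order `ν`. -/
noncomputable def besselI (ν : ℕ) (x : ℝ) : ℝ :=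
  ∑' m : ℕ, (x / 2) ^ (2 * m + ν) / ((Nat.factorial m) * Real.Gamma (m + ν + 1))

lemma besselI_eq_pb (ν : ℕ) (x : ℝ) : besselI ν (2 * x) = pb x ν := by
  rw [besselI, pb]
  exact besselI_eq_pb' ν x

theorem gini_poisson
    {Ω : Type*} [MeasurableSpace Ω] (ℙ : Measure Ω) [IsProbabilityMeasure ℙ]
    (lam : ℝ) (hlam : 0 < lam)
    (X₁ X₂ : Ω → ℕ) (hX₁ : Measurable X₁) (hX₂ : Measurable X₂)
    (hd₁ : ∀ k : ℕ, ℙ {ω | X₁ ω = k}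
        = ENNReal.ofReal (Real.exp (-lam) * lam ^ k / (Nat.factorial k)))
    (hd₂ : ∀ k : ℕ, ℙ {ω | X₂ ω = k}
        = ENNReal.ofReal (Real.exp (-lam) * lam ^ k / (Nat.factorial k)))
    (hindep : ProbabilityTheory.IndepFun X₁ X₂ ℙ) :
    (∫ ω, |(X₁ ω : ℝ) - (X₂ ω : ℝ)| ∂ℙ) / (2 * lam)
      = Real.exp (-2 * lam) * (besselI 0 (2 * lam) + besselI 1 (2 * lam)) := by
  have hlam' : (0:ℝ) ≤ lam := hlam.le
  set a : ℕ → ℝ := fun k => Real.exp (-lam) * lam ^ k / (Nat.factorial k) with ha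
  set A : ℕ → ENNReal := fun k => ENNReal.ofReal (a k) with hA
  have ha_nonneg : ∀ k, 0 ≤ a k := fun k => by
    simp only [ha]; positivity
  -- measure of singletons of the pair map
  have hpair : Measurable (fun ω => (X₁ ω, X₂ ω)) := hX₁.prodMk hX₂
  have hμ : ∀ p : ℕ × ℕ, Measure.map (fun ω => (X₁ ω, X₂ ω)) ℙ {p} = A p.1 * A p.2 := by
    intro p
    rw [Measure.map_apply hpair (measurableSet_singleton p)]
    have hset : (fun ω => (X₁ ω, X₂ ω)) ⁻¹' {p} = X₁ ⁻¹' {p.1} ∩ X₂ ⁻¹' {p.2} := by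
      ext ω; simp [Prod.ext_iff]
    rw [hset, hindep.measure_inter_preimage_eq_mul {p.1} {p.2}
      (measurableSet_singleton _) (measurableSet_singleton _)]
    have h1 : X₁ ⁻¹' {p.1} = {ω | X₁ ω = p.1} := rfl
    have h2 : X₂ ⁻¹' {p.2} = {ω | X₂ ω = p.2} := rfl
    rw [h1, h2, hd₁, hd₂]
  -- |j - k| as a natural number
  have habs : ∀ j k : ℕ, |(j:ℝ) - (k:ℝ)| = (((j - k) + (k - j) : ℕ) : ℝ) := by
    intro j k
    rcases le_total j k with h | h
    · rw [Nat.sub_eq_zero_of_le h, zero_add,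
        abs_of_nonpos (by simp [sub_nonpos, Nat.cast_le, h]),
        Nat.cast_sub h]
      ring
    · rw [Nat.sub_eq_zero_of_le h, add_zero,
        abs_of_nonneg (by simp [sub_nonneg, Nat.cast_le, h]),
        Nat.cast_sub h]
  -- the lintegral as a double sum
  have hlin : ∫⁻ ω, ENNReal.ofReal |(X₁ ω : ℝ) - (X₂ ω : ℝ)| ∂ℙ
      = ∑' p : ℕ × ℕ, (((p.1 - p.2) + (p.2 - p.1) : ℕ) : ENNReal) * (A p.1 * A p.2) := by
    have hF : Measurable (fun p : ℕ × ℕ => ENNReal.ofReal |(p.1:ℝ) - (p.2:ℝ)|) :=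
      measurable_of_countable _
    rw [← lintegral_map hF hpair, lintegral_countable']
    apply tsum_congr; intro p
    rw [hμ p, habs p.1 p.2, ENNReal.ofReal_natCast]
  -- evaluate the inner sums
  have hC : ∀ d : ℕ, (∑' k : ℕ, A (k + d) * A k)
      = ENNReal.ofReal (Real.exp (-(2*lam)) * pb lam d) := by
    intro d
    have hterm : ∀ k : ℕ, a (k + d) * a k
        = Real.exp (-(2*lam)) * (lam ^ (2*k + d) / (Nat.factorial k * Nat.factorial (k + d))) := by
      intro k
      simp only [ha]
      have hexp : Real.exp (-(2*lam)) = Real.exp (-lam) * Real.exp (-lam) := by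
        rw [← Real.exp_add]; ring_nf
      have hpow : lam ^ (2*k + d) = lam ^ (k + d) * lam ^ k := by
        rw [← pow_add]; ring_nf
      rw [div_mul_div_comm,
        show Real.exp (-lam) * lam ^ (k + d) * (Real.exp (-lam) * lam ^ k)
          = Real.exp (-(2*lam)) * lam ^ (2*k + d) by rw [hexp, hpow]; ring,
        mul_div_assoc, mul_comm ((Nat.factorial (k + d)):ℝ) ((Nat.factorial k):ℝ)]
    have hsum : Summable (fun k : ℕ => a (k + d) * a k) := by
      apply Summable.congr (f := fun k : ℕ =>
        Real.exp (-(2*lam)) * (lam ^ (2*k + d) / (Nat.factorial k * Nat.factorial (k + d))))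
      · exact (summable_pb hlam' d).mul_left _
      · exact fun k => (hterm k).symm
    calc (∑' k : ℕ, A (k + d) * A k)
        = ∑' k : ℕ, ENNReal.ofReal (a (k + d) * a k) :=
          tsum_congr fun k => (ENNReal.ofReal_mul (ha_nonneg _)).symm
      _ = ENNReal.ofReal (∑' k : ℕ, a (k + d) * a k) :=
          (ENNReal.ofReal_tsum_of_nonneg
            (fun k => mul_nonneg (ha_nonneg _) (ha_nonneg _)) hsum).symm
      _ = ENNReal.ofReal (Real.exp (-(2*lam)) * pb lam d) := by
          congr 1
          rw [tsum_congr hterm, tsum_mul_left, pb]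
  -- the outer sum over d
  have houter : (∑' d : ℕ, (d : ENNReal) * ∑' k : ℕ, A (k + d) * A k)
      = ENNReal.ofReal (Real.exp (-(2*lam)) * (lam * (pb lam 0 + pb lam 1))) := by
    have h1 : ∀ d : ℕ, (d : ENNReal) * ENNReal.ofReal (Real.exp (-(2*lam)) * pb lam d)
        = ENNReal.ofReal (Real.exp (-(2*lam)) * ((d:ℝ) * pb lam d)) := by
      intro d
      rw [← ENNReal.ofReal_natCast d, ← ENNReal.ofReal_mul (by positivity)]
      congr 1
      ring
    have h2 : Summable (fun d : ℕ => Real.exp (-(2*lam)) * ((d:ℝ) * pb lam d)) :=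
      (summable_d_pb hlam').mul_left _
    calc (∑' d : ℕ, (d : ENNReal) * ∑' k : ℕ, A (k + d) * A k)
        = ∑' d : ℕ, ENNReal.ofReal (Real.exp (-(2*lam)) * ((d:ℝ) * pb lam d)) := by
          apply tsum_congr; intro d; rw [hC d, h1 d]
      _ = ENNReal.ofReal (∑' d : ℕ, Real.exp (-(2*lam)) * ((d:ℝ) * pb lam d)) :=
          (ENNReal.ofReal_tsum_of_nonneg
            (fun d => by have := pb_nonneg hlam' d; positivity) h2).symm
      _ = ENNReal.ofReal (Real.exp (-(2*lam)) * (lam * (pb lam 0 + pb lam 1))) := by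
          rw [tsum_mul_left, tsum_d_pb hlam']
  -- the value of the integral
  have hR : (0:ℝ) ≤ Real.exp (-(2*lam)) * (lam * (pb lam 0 + pb lam 1)) := by
    have h0 := pb_nonneg hlam' 0
    have h1 := pb_nonneg hlam' 1
    positivity
  have hint : (∫ ω, |(X₁ ω : ℝ) - (X₂ ω : ℝ)| ∂ℙ)
      = 2 * (Real.exp (-(2*lam)) * (lam * (pb lam 0 + pb lam 1))) := by
    have hmeas : AEStronglyMeasurable (fun ω => |(X₁ ω : ℝ) - (X₂ ω : ℝ)|) ℙ := by
      apply Measurable.aestronglyMeasurable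
      exact (((measurable_of_countable (Nat.cast : ℕ → ℝ)).comp hX₁).sub
        ((measurable_of_countable (Nat.cast : ℕ → ℝ)).comp hX₂)).abs
    rw [integral_eq_lintegral_of_nonneg_ae
      (Filter.Eventually.of_forall fun ω => abs_nonneg _) hmeas]
    rw [hlin, enn_key A, houter]
    rw [show (2 : ENNReal) = ENNReal.ofReal (2:ℝ) by simp,
      ← ENNReal.ofReal_mul (by norm_num), ENNReal.toReal_ofReal (by positivity)]
  rw [hint, besselI_eq_pb 0 lam, besselI_eq_pb 1 lam,
    show (-2 * lam) = -(2*lam) by ring]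
  have h2lam : (2 * lam) ≠ 0 := by positivity
  field_simp
end

section
/- Let X ~ Gamma(α, λ) with shape α > 0 and rate λ > 0. Then the Gini coefficient of X equals Γ(2α+1)/(2^{2α} Γ(α+1)²). -/
open scoped ENNReal NNReal
open MeasureTheory ProbabilityTheory Real Set

lemma integrable_gammaPDFReal {a r : ℝ} (ha : 0 < a) (hr : 0 < r) :
    Integrable (gammaPDFReal a r) := by
  refine ⟨(measurable_gammaPDFReal a r).aestronglyMeasurable, ?_⟩
  rw [hasFiniteIntegral_iff_ofReal (ae_of_all _ (gammaPDFReal_nonneg ha hr))]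
  have := lintegral_gammaPDF_eq_one ha hr
  simp only [gammaPDF] at this
  rw [this]
  exact ENNReal.one_lt_top

lemma integrableOn_rpow_mul_exp_neg {a r : ℝ} (ha : 0 < a) (hr : 0 < r) :
    IntegrableOn (fun x : ℝ => x ^ (a - 1) * exp (-(r * x))) (Ioi 0) := by
  have h := (integrable_gammaPDFReal ha hr).integrableOn (s := Ioi 0)
  have h1 : IntegrableOn (fun x : ℝ => r ^ a / Gamma a * x ^ (a-1) * exp (-(r * x))) (Ioi 0) := by
    refine h.congr_fun (fun x hx => ?_) measurableSet_Ioi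
    simp [gammaPDFReal, le_of_lt (mem_Ioi.mp hx)]
  have h2 : IntegrableOn
      (fun x : ℝ => Gamma a / r ^ a * (r ^ a / Gamma a * x ^ (a-1) * exp (-(r * x)))) (Ioi 0) :=
    h1.const_mul _
  refine h2.congr_fun (fun x hx => ?_) measurableSet_Ioi
  have hg : Gamma a ≠ 0 := (Gamma_pos_of_pos ha).ne'
  have hra : (r:ℝ) ^ a ≠ 0 := (rpow_pos_of_pos hr a).ne'
  field_simp

lemma intervalIntegrable_beta {α : ℝ} (hα : 0 < α) :
    IntervalIntegrable (fun t : ℝ => (1 - t) * t ^ (α - 1) * (1 + t) ^ (-(2*α+1)))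
      volume 0 1 := by
  refine (intervalIntegral.intervalIntegrable_rpow' (r := α - 1) (by linarith)).mono_fun
    ?_ ?_
  · apply Measurable.aestronglyMeasurable
    fun_prop
  · rw [uIoc_of_le (by norm_num : (0:ℝ) ≤ 1)]
    filter_upwards [ae_restrict_mem measurableSet_Ioc] with t ht
    obtain ⟨ht0, ht1⟩ := ht
    have h1 : (0:ℝ) ≤ 1 - t := by linarith
    have h2 : (0:ℝ) ≤ t ^ (α - 1) := rpow_nonneg ht0.le _
    have h3 : (0:ℝ) < (1 + t) ^ (-(2*α+1)) := rpow_pos_of_pos (by linarith) _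
    have h4 : (1 + t) ^ (-(2*α+1)) ≤ 1 :=
      rpow_le_one_of_one_le_of_nonpos (by linarith) (by linarith)
    rw [Real.norm_eq_abs, Real.norm_eq_abs, abs_of_nonneg (by positivity),
      abs_of_nonneg h2]
    calc (1 - t) * t ^ (α - 1) * (1 + t) ^ (-(2*α+1))
        ≤ 1 * t ^ (α - 1) * 1 := by
          apply mul_le_mul (mul_le_mul (by linarith) le_rfl h2 (by norm_num)) h4 h3.le
          positivity
      _ = t ^ (α - 1) := by ring

lemma beta_integral_value {α : ℝ} (hα : 0 < α) :
    ∫ t in (0:ℝ)..1, (1 - t) * t ^ (α - 1) * (1 + t) ^ (-(2*α+1))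
      = 2 ^ (-(2*α)) / α := by
  have hF : ∀ x ∈ Ioo (0:ℝ) 1, HasDerivAt (fun t : ℝ => (1/α) * (t ^ α * (1 + t) ^ (-(2*α))))
      ((1 - x) * x ^ (α - 1) * (1 + x) ^ (-(2*α+1))) x := by
    intro x hx
    obtain ⟨hx0, hx1⟩ := hx
    have h1x : (0:ℝ) < 1 + x := by linarith
    have d1 : HasDerivAt (fun t : ℝ => t ^ α) (α * x ^ (α - 1)) x :=
      Real.hasDerivAt_rpow_const (Or.inl hx0.ne')
    have d2 : HasDerivAt (fun t : ℝ => (1 + t) ^ (-(2*α))) (1 * (-(2*α)) * (1+x) ^ (-(2*α) - 1)) x := by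
      exact ((hasDerivAt_id x).const_add 1).rpow_const (Or.inl h1x.ne')
    have := ((d1.mul d2).const_mul (1/α))
    refine this.congr_deriv ?_
    have e1 : (1+x) ^ (-(2*α) - 1) = (1+x) ^ (-(2*α+1)) := by ring_nf
    have e2 : (1+x) ^ (-(2*α)) = (1+x) ^ (-(2*α+1)) * (1+x) := by
      rw [← rpow_add_one h1x.ne']; ring_nf
    have e3 : x ^ α = x ^ (α-1) * x := by
      rw [← rpow_add_one hx0.ne']; ring_nf
    rw [e1, e2, e3]
    field_simp
    ring
  have hcont : ContinuousOn (fun t : ℝ => (1/α) * (t ^ α * (1 + t) ^ (-(2*α)))) (Icc 0 1) := by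
    intro x hx
    apply ContinuousAt.continuousWithinAt
    have c1 : ContinuousAt (fun t : ℝ => t ^ α) x :=
      Real.continuousAt_rpow_const x α (Or.inr hα.le)
    have c2 : ContinuousAt (fun t : ℝ => (1 + t) ^ (-(2*α))) x := by
      have : (0:ℝ) < 1 + x := by have := hx.1; linarith
      exact (Real.continuousAt_rpow_const (1+x) _ (Or.inl this.ne')).comp
        (by fun_prop)
    exact (c1.mul c2).const_mul _
  rw [intervalIntegral.integral_eq_sub_of_hasDeriv_right_of_le (by norm_num) hcont
    (fun x hx => (hF x hx).hasDerivWithinAt) (intervalIntegrable_beta hα)]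
  rw [Real.one_rpow, Real.zero_rpow hα.ne']
  norm_num [div_eq_inv_mul]

lemma inner_lintegral_eq {α lam : ℝ} (hα : 0 < α) (hlam : 0 < lam) {x : ℝ} (hx : 0 < x) :
    ∫⁻ y, gammaPDF α lam y * ENNReal.ofReal (x - y)
      = ENNReal.ofReal (lam ^ α / Gamma α * x ^ (α+1) *
          ∫ t in Ioc (0:ℝ) 1, (1 - t) * t ^ (α-1) * exp (-(lam * x * t))) := by
  set c : ℝ := lam ^ α / Gamma α with hc
  have hc0 : 0 ≤ c := by
    have := Real.Gamma_pos_of_pos hα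
    positivity
  set g : ℝ → ℝ := fun y => c * y ^ (α-1) * exp (-(lam * y)) * (x - y) with hg
  have step1 : ∫⁻ y, gammaPDF α lam y * ENNReal.ofReal (x - y)
      = ∫⁻ y in Icc 0 x, gammaPDF α lam y * ENNReal.ofReal (x - y) := by
    rw [← lintegral_indicator measurableSet_Icc]
    congr 1
    ext y
    rw [Set.indicator_apply]
    split_ifs with h
    · rfl
    · rw [mem_Icc, not_and_or] at h
      rcases h with h | h
      · rw [gammaPDF_of_neg (lt_of_not_ge h), zero_mul]
      · rw [ENNReal.ofReal_eq_zero.mpr (by linarith [lt_of_not_ge h]), mul_zero]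
  have step2 : volume.restrict (Icc (0:ℝ) x) = volume.restrict (Ioc 0 x) :=
    (Measure.restrict_congr_set Ioc_ae_eq_Icc).symm
  have step3 : ∫⁻ y in Ioc 0 x, gammaPDF α lam y * ENNReal.ofReal (x - y)
      = ∫⁻ y in Ioc 0 x, ENNReal.ofReal (g y) := by
    refine setLIntegral_congr_fun measurableSet_Ioc (fun y hy => ?_)
    obtain ⟨hy0, hyx⟩ := hy
    rw [gammaPDF_of_nonneg hy0.le, ← ENNReal.ofReal_mul (by positivity)]
  have hbase : IntegrableOn (fun y : ℝ => c * (y ^ (α-1) * exp (-(lam * y)))) (Ioc 0 x) :=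
    ((integrableOn_rpow_mul_exp_neg hα hlam).mono_set Ioc_subset_Ioi_self).const_mul c
  have hgint : IntegrableOn g (Ioc 0 x) := by
    refine (hbase.mul_const x).mono' ?_ ?_
    · apply Measurable.aestronglyMeasurable; fun_prop
    · filter_upwards [ae_restrict_mem measurableSet_Ioc] with y hy
      obtain ⟨hy0, hyx⟩ := hy
      rw [Real.norm_eq_abs, hg]
      simp only
      have h2 : (0:ℝ) ≤ c * y ^ (α-1) * exp (-(lam*y)) := by positivity
      have hxy : (0:ℝ) ≤ x - y := by linarith
      rw [abs_of_nonneg (mul_nonneg h2 hxy)]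
      calc c * y ^ (α-1) * exp (-(lam * y)) * (x - y)
          ≤ c * y ^ (α-1) * exp (-(lam * y)) * x := by nlinarith
        _ = c * (y ^ (α-1) * exp (-(lam * y))) * x := by ring
  have step4 : ∫⁻ y in Ioc 0 x, ENNReal.ofReal (g y)
      = ENNReal.ofReal (∫ y in Ioc 0 x, g y) := by
    rw [ofReal_integral_eq_lintegral_ofReal hgint]
    filter_upwards [ae_restrict_mem measurableSet_Ioc] with y hy
    obtain ⟨hy0, hyx⟩ := hy
    have : (0:ℝ) ≤ x - y := by linarith
    positivity
  have step5 : ∫ y in Ioc 0 x, g y = x • ∫ t in (0:ℝ)..1, g (t * x) := by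
    rw [← intervalIntegral.integral_of_le hx.le]
    have key := intervalIntegral.smul_integral_comp_mul_right (a := 0) (b := 1) g x
    rw [zero_mul, one_mul] at key
    exact key.symm
  have step6 : ∫ t in (0:ℝ)..1, g (t * x)
      = (c * x ^ (α-1) * x) * ∫ t in Ioc (0:ℝ) 1, (1 - t) * t ^ (α-1) * exp (-(lam * x * t)) := by
    rw [intervalIntegral.integral_of_le (by norm_num : (0:ℝ) ≤ 1), ← integral_const_mul]
    refine setIntegral_congr_fun measurableSet_Ioc fun t ht => ?_
    obtain ⟨ht0, ht1⟩ := ht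
    rw [hg]
    simp only
    rw [Real.mul_rpow ht0.le hx.le]
    have e1 : x - t * x = x * (1 - t) := by ring
    have e2 : -(lam * (t * x)) = -(lam * x * t) := by ring
    rw [e1, e2]
    ring
  rw [step1, step2, step3, step4, step5, step6]
  congr 1
  have hxp : x ^ (α+1) = x ^ (α-1) * x * x := by
    rw [show α + 1 = (α-1) + 1 + 1 by ring, rpow_add_one hx.ne', rpow_add_one hx.ne']
  rw [hxp, smul_eq_mul]
  ring

lemma outer_lintegral_eq {α lam : ℝ} (hα : 0 < α) (hlam : 0 < lam) :
    ∫⁻ x, gammaPDF α lam x * ∫⁻ y, gammaPDF α lam y * ENNReal.ofReal (x - y)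
      = ENNReal.ofReal ((lam ^ α / Gamma α) ^ 2 * Gamma (2*α+1) * (1/lam) ^ (2*α+1)
          * (2 ^ (-(2*α)) / α)) := by
  have hΓ : (0:ℝ) < Gamma α := Gamma_pos_of_pos hα
  set c : ℝ := lam ^ α / Gamma α with hc
  have hc0 : 0 ≤ c := by positivity
  set Φ : ℝ → ℝ → ℝ≥0∞ := fun x t =>
    ENNReal.ofReal (c^2 * x ^ (2*α) * exp (-(lam * x)) *
      ((1 - t) * t ^ (α-1) * exp (-(lam * x * t)))) with hΦ
  have htint : IntegrableOn (fun t : ℝ => t ^ (α-1)) (Ioc (0:ℝ) 1) :=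
    (intervalIntegrable_iff_integrableOn_Ioc_of_le (by norm_num)).mp
      (intervalIntegral.intervalIntegrable_rpow' (by linarith))
  have hA0 : (∫⁻ y, gammaPDF α lam y * ENNReal.ofReal ((0:ℝ) - y)) = 0 := by
    have h : ∀ y : ℝ, gammaPDF α lam y * ENNReal.ofReal ((0:ℝ) - y) = 0 := by
      intro y
      rcases lt_or_ge y 0 with h | h
      · rw [gammaPDF_of_neg h, zero_mul]
      · rw [ENNReal.ofReal_eq_zero.mpr (by linarith), mul_zero]
    rw [lintegral_congr h, lintegral_zero]
  have stepa : (∫⁻ x, gammaPDF α lam x * ∫⁻ y, gammaPDF α lam y * ENNReal.ofReal (x - y))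
      = ∫⁻ x in Ioi 0, gammaPDF α lam x * ∫⁻ y, gammaPDF α lam y * ENNReal.ofReal (x - y) := by
    rw [← lintegral_indicator measurableSet_Ioi]
    congr 1
    ext x
    rw [Set.indicator_apply]
    split_ifs with h
    · rfl
    · rw [mem_Ioi, not_lt] at h
      rcases lt_or_eq_of_le h with h' | h'
      · rw [gammaPDF_of_neg h', zero_mul]
      · rw [h', hA0, mul_zero]
  have stepb : ∀ x ∈ Ioi (0:ℝ),
      gammaPDF α lam x * ∫⁻ y, gammaPDF α lam y * ENNReal.ofReal (x - y)
        = ∫⁻ t in Ioc (0:ℝ) 1, Φ x t := by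
    intro x hx
    have hx0 : (0:ℝ) < x := hx
    have hB0 : (0:ℝ) ≤ c^2 * x ^ (2*α) * exp (-(lam*x)) :=
      mul_nonneg (mul_nonneg (sq_nonneg c) (rpow_nonneg hx0.le _)) (exp_pos _).le
    rw [inner_lintegral_eq hα hlam hx, gammaPDF_of_nonneg (le_of_lt hx)]
    set J : ℝ := ∫ t in Ioc (0:ℝ) 1, (1 - t) * t ^ (α-1) * exp (-(lam * x * t)) with hJ
    have hJint : IntegrableOn
        (fun t : ℝ => (1 - t) * t ^ (α-1) * exp (-(lam * x * t))) (Ioc (0:ℝ) 1) := by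
      refine htint.mono' (by apply Measurable.aestronglyMeasurable; fun_prop) ?_
      filter_upwards [ae_restrict_mem measurableSet_Ioc] with t ht
      obtain ⟨ht0, ht1⟩ := ht
      have h1 : (0:ℝ) ≤ 1 - t := by linarith
      have h2 : (0:ℝ) ≤ t ^ (α-1) := rpow_nonneg ht0.le _
      have h3 : exp (-(lam * x * t)) ≤ 1 := by
        rw [exp_le_one_iff]
        have : (0:ℝ) ≤ lam * x * t := by positivity
        linarith
      have h4 : (0:ℝ) < exp (-(lam * x * t)) := exp_pos _
      rw [Real.norm_eq_abs, abs_of_nonneg (mul_nonneg (mul_nonneg h1 h2) h4.le)]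
      calc (1 - t) * t ^ (α-1) * exp (-(lam * x * t))
          ≤ (1 - t) * t ^ (α-1) * 1 := mul_le_mul_of_nonneg_left h3 (mul_nonneg h1 h2)
        _ = (1 - t) * t ^ (α-1) := mul_one _
        _ ≤ 1 * t ^ (α-1) := mul_le_mul_of_nonneg_right (by linarith) h2
        _ = t ^ (α-1) := one_mul _
    have hmeasf : Measurable (fun t : ℝ => ENNReal.ofReal
        ((1 - t) * t ^ (α-1) * exp (-(lam * x * t)))) := by fun_prop
    rw [← ENNReal.ofReal_mul
      (mul_nonneg (mul_nonneg hc0 (rpow_nonneg hx0.le _)) (exp_pos _).le)]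
    have hxx : c * x ^ (α-1) * exp (-(lam*x)) * (c * x ^ (α+1) * J)
        = c^2 * x ^ (2*α) * exp (-(lam*x)) * J := by
      have hx1 : x ^ (α-1) * x ^ (α+1) = x ^ (2*α) := by
        rw [← rpow_add hx0]
        congr 1
        ring
      rw [← hx1]
      ring
    rw [hxx, ENNReal.ofReal_mul hB0, hJ,
      ofReal_integral_eq_lintegral_ofReal hJint ?_, ← lintegral_const_mul _ hmeasf]
    · refine setLIntegral_congr_fun measurableSet_Ioc (fun t ht => ?_)
      rw [hΦ]
      simp only
      rw [ENNReal.ofReal_mul hB0]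
    · filter_upwards [ae_restrict_mem measurableSet_Ioc] with t ht
      obtain ⟨ht0, ht1⟩ := ht
      have h1 : (0:ℝ) ≤ 1 - t := by linarith
      positivity
  have hmeasΦ : Measurable (Function.uncurry Φ) := by
    rw [hΦ]
    apply Measurable.ennreal_ofReal
    fun_prop
  have stepd : ∀ t ∈ Ioc (0:ℝ) 1, (∫⁻ x in Ioi 0, Φ x t)
      = ENNReal.ofReal (c^2 * Gamma (2*α+1) * (1/lam) ^ (2*α+1) *
          ((1 - t) * t ^ (α-1) * (1+t) ^ (-(2*α+1)))) := by
    intro t ht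
    obtain ⟨ht0, ht1⟩ := ht
    have h1t : (0:ℝ) < 1 + t := by linarith
    have hr : (0:ℝ) < lam * (1+t) := by positivity
    have h1 : (0:ℝ) ≤ 1 - t := by linarith
    set K : ℝ := c^2 * ((1 - t) * t ^ (α-1)) with hK
    have hK0 : 0 ≤ K := by positivity
    have hpt : ∀ x ∈ Ioi (0:ℝ), Φ x t
        = ENNReal.ofReal (K * (x ^ (2*α+1-1) * exp (-((lam*(1+t)) * x)))) := by
      intro x hx
      rw [hΦ]
      simp only
      congr 1
      rw [show (2*α+1-1:ℝ) = 2*α by ring,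
        show -((lam*(1+t))*x) = -(lam*x) + -(lam*x*t) by ring, Real.exp_add, hK]
      ring
    rw [setLIntegral_congr_fun measurableSet_Ioi hpt]
    have hint : IntegrableOn (fun x : ℝ => x ^ (2*α+1-1) * exp (-((lam*(1+t)) * x))) (Ioi 0) :=
      integrableOn_rpow_mul_exp_neg (by linarith) hr
    rw [← ofReal_integral_eq_lintegral_ofReal (hint.const_mul K) ?_]
    · rw [integral_const_mul, integral_rpow_mul_exp_neg_mul_Ioi (by linarith) hr]
      congr 1
      have key : (1/(lam*(1+t))) ^ (2*α+1) = (1/lam) ^ (2*α+1) * (1+t) ^ (-(2*α+1)) := by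
        rw [show (1:ℝ)/(lam*(1+t)) = (1/lam) * (1+t)⁻¹ by field_simp,
          mul_rpow (by positivity) (by positivity), inv_rpow h1t.le, rpow_neg h1t.le]
      rw [key, hK]
      ring
    · filter_upwards [ae_restrict_mem measurableSet_Ioi] with x hx
      have hx0 : (0:ℝ) < x := hx
      positivity
  have hbint : IntegrableOn (fun t : ℝ => (1 - t) * t ^ (α-1) * (1+t) ^ (-(2*α+1))) (Ioc 0 1) :=
    (intervalIntegrable_iff_integrableOn_Ioc_of_le (by norm_num)).mp (intervalIntegrable_beta hα)
  calc (∫⁻ x, gammaPDF α lam x * ∫⁻ y, gammaPDF α lam y * ENNReal.ofReal (x - y))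
      = ∫⁻ x in Ioi 0, ∫⁻ t in Ioc (0:ℝ) 1, Φ x t := by
        rw [stepa]
        exact setLIntegral_congr_fun measurableSet_Ioi stepb
    _ = ∫⁻ t in Ioc (0:ℝ) 1, ∫⁻ x in Ioi 0, Φ x t :=
        lintegral_lintegral_swap hmeasΦ.aemeasurable
    _ = ∫⁻ t in Ioc (0:ℝ) 1, ENNReal.ofReal ((c^2 * Gamma (2*α+1) * (1/lam) ^ (2*α+1)) *
          ((1 - t) * t ^ (α-1) * (1+t) ^ (-(2*α+1)))) := by
        refine setLIntegral_congr_fun measurableSet_Ioc (fun t ht => ?_)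
        rw [stepd t ht]
    _ = ENNReal.ofReal ((c^2 * Gamma (2*α+1) * (1/lam) ^ (2*α+1)) *
          ∫ t in Ioc (0:ℝ) 1, (1 - t) * t ^ (α-1) * (1+t) ^ (-(2*α+1))) := by
        rw [← integral_const_mul,
          ofReal_integral_eq_lintegral_ofReal (hbint.const_mul _) ?_]
        filter_upwards [ae_restrict_mem measurableSet_Ioc] with t ht
        obtain ⟨ht0, ht1⟩ := ht
        have h1 : (0:ℝ) ≤ 1 - t := by linarith
        have h2 : (0:ℝ) ≤ t ^ (α-1) := rpow_nonneg ht0.le _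
        have h3 : (0:ℝ) ≤ (1+t) ^ (-(2*α+1)) := rpow_nonneg (by linarith) _
        have hΓ2 : (0:ℝ) < Gamma (2*α+1) := Gamma_pos_of_pos (by linarith)
        exact mul_nonneg (mul_nonneg (mul_nonneg (sq_nonneg c) hΓ2.le)
          (rpow_nonneg (by positivity) _)) (mul_nonneg (mul_nonneg h1 h2) h3)
    _ = ENNReal.ofReal ((lam ^ α / Gamma α) ^ 2 * Gamma (2*α+1) * (1/lam) ^ (2*α+1)
          * (2 ^ (-(2*α)) / α)) := by
        rw [← intervalIntegral.integral_of_le (by norm_num : (0:ℝ) ≤ 1), beta_integral_value hα]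

theorem gini_gamma
    {Ω : Type*} [MeasurableSpace Ω] (P : Measure Ω) [IsProbabilityMeasure P]
    (α lam : ℝ) (hα : 0 < α) (hlam : 0 < lam)
    (X₁ X₂ : Ω → ℝ) (hX₁ : Measurable X₁) (hX₂ : Measurable X₂)
    (hd₁ : Measure.map X₁ P = gammaMeasure α lam)
    (hd₂ : Measure.map X₂ P = gammaMeasure α lam)
    (hindep : IndepFun X₁ X₂ P) :
    (∫ ω, |X₁ ω - X₂ ω| ∂P) / (2 * (α / lam))
      = Real.Gamma (2 * α + 1) / (2 ^ (2 * α) * (Real.Gamma (α + 1)) ^ 2) := by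
  have hΓ : (0:ℝ) < Gamma α := Gamma_pos_of_pos hα
  haveI hprob : IsProbabilityMeasure (gammaMeasure α lam) := isProbabilityMeasure_gammaMeasure hα hlam
  set γ : Measure ℝ := gammaMeasure α lam with hγ
  have hmap : Measure.map (fun ω => (X₁ ω, X₂ ω)) P = γ.prod γ := by
    rw [(indepFun_iff_map_prod_eq_prod_map_map hX₁.aemeasurable hX₂.aemeasurable).mp hindep,
      hd₁, hd₂]
  have habs : ∫ ω, |X₁ ω - X₂ ω| ∂P = ∫ p : ℝ × ℝ, |p.1 - p.2| ∂(γ.prod γ) := by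
    rw [← hmap, integral_map (hX₁.prodMk hX₂).aemeasurable
      (Continuous.aestronglyMeasurable (by fun_prop))]
  have h2 : ∫ p : ℝ × ℝ, |p.1 - p.2| ∂(γ.prod γ)
      = (∫⁻ p : ℝ × ℝ, ENNReal.ofReal |p.1 - p.2| ∂(γ.prod γ)).toReal := by
    rw [integral_eq_lintegral_of_nonneg_ae (ae_of_all _ fun p => abs_nonneg _)
      (Continuous.aestronglyMeasurable (by fun_prop))]
  have hsplit : ∀ p : ℝ × ℝ, ENNReal.ofReal |p.1 - p.2|
      = ENNReal.ofReal (p.1 - p.2) + ENNReal.ofReal (p.2 - p.1) := by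
    intro p
    rcases le_total p.2 p.1 with h | h
    · rw [abs_of_nonneg (by linarith), ENNReal.ofReal_eq_zero.mpr (by linarith : p.2 - p.1 ≤ 0),
        add_zero]
    · rw [abs_of_nonpos (by linarith), ENNReal.ofReal_eq_zero.mpr (by linarith : p.1 - p.2 ≤ 0),
        zero_add, neg_sub]
  have hswap : ∫⁻ p : ℝ × ℝ, ENNReal.ofReal (p.2 - p.1) ∂(γ.prod γ)
      = ∫⁻ p : ℝ × ℝ, ENNReal.ofReal (p.1 - p.2) ∂(γ.prod γ) := by
    calc ∫⁻ p : ℝ × ℝ, ENNReal.ofReal (p.2 - p.1) ∂(γ.prod γ)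
        = ∫⁻ p : ℝ × ℝ, ENNReal.ofReal (p.1 - p.2) ∂(Measure.map Prod.swap (γ.prod γ)) := by
          rw [lintegral_map (by fun_prop) measurable_swap]
          rfl
      _ = ∫⁻ p : ℝ × ℝ, ENNReal.ofReal (p.1 - p.2) ∂(γ.prod γ) := by rw [Measure.prod_swap]
  have hpdfmeas : Measurable (gammaPDF α lam) :=
    (measurable_gammaPDFReal α lam).ennreal_ofReal
  have hM : ∫⁻ p : ℝ × ℝ, ENNReal.ofReal (p.1 - p.2) ∂(γ.prod γ)
      = ∫⁻ x, gammaPDF α lam x * ∫⁻ y, gammaPDF α lam y * ENNReal.ofReal (x - y) := by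
    rw [lintegral_prod _ (by fun_prop : Measurable fun p : ℝ × ℝ => ENNReal.ofReal (p.1 - p.2)).aemeasurable]
    have hinner : ∀ x : ℝ, ∫⁻ y, ENNReal.ofReal (x - y) ∂γ
        = ∫⁻ y, gammaPDF α lam y * ENNReal.ofReal (x - y) := by
      intro x
      rw [hγ, gammaMeasure,
        lintegral_withDensity_eq_lintegral_mul _ hpdfmeas (by fun_prop)]
      rfl
    rw [lintegral_congr hinner]
    rw [hγ, gammaMeasure,
      lintegral_withDensity_eq_lintegral_mul _ hpdfmeas ?_]
    · rfl
    · exact Measurable.lintegral_prod_right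
        (f := fun x y => gammaPDF α lam y * ENNReal.ofReal (x - y)) (by fun_prop)
  set V : ℝ := (lam ^ α / Gamma α) ^ 2 * Gamma (2*α+1) * (1/lam) ^ (2*α+1)
      * (2 ^ (-(2*α)) / α) with hV
  have hΓ2 : (0:ℝ) < Gamma (2*α+1) := Gamma_pos_of_pos (by linarith)
  have hV0 : 0 ≤ V := by
    rw [hV]
    have : (0:ℝ) < 2 ^ (-(2*α)) := rpow_pos_of_pos (by norm_num) _
    positivity
  have htot : ∫⁻ p : ℝ × ℝ, ENNReal.ofReal |p.1 - p.2| ∂(γ.prod γ)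
      = 2 * ENNReal.ofReal V := by
    rw [lintegral_congr hsplit, lintegral_add_left (by fun_prop), hswap, hM,
      outer_lintegral_eq hα hlam, ← hV, two_mul]
  have hE : ∫ ω, |X₁ ω - X₂ ω| ∂P = 2 * V := by
    rw [habs, h2, htot, ENNReal.toReal_mul, ENNReal.toReal_ofReal hV0]
    norm_num
  rw [hE]
  -- arithmetic
  have hlamne : lam ≠ 0 := hlam.ne'
  have hαne : α ≠ 0 := hα.ne'
  have hL : ((lam:ℝ) ^ α) ^ 2 = lam ^ (2*α) := by
    rw [← Real.rpow_natCast (lam ^ α) 2, ← Real.rpow_mul hlam.le]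
    norm_num [mul_comm]
  have hlam2 : lam ^ (2*α+1) = lam ^ (2*α) * lam := by
    rw [rpow_add hlam, rpow_one]
  have h1lam : ((1:ℝ)/lam) ^ (2*α+1) = (lam ^ (2*α+1))⁻¹ := by
    rw [one_div, inv_rpow hlam.le]
  have h2a : (2:ℝ) ^ (-(2*α)) = ((2:ℝ) ^ (2*α))⁻¹ := rpow_neg (by norm_num) _
  have hp2 : (0:ℝ) < (2:ℝ) ^ (2*α) := rpow_pos_of_pos (by norm_num) _
  have hlam2a : (0:ℝ) < lam ^ (2*α) := rpow_pos_of_pos hlam _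
  have hGadd : Gamma (α + 1) = α * Gamma α := Gamma_add_one hαne
  rw [hV, hGadd, div_pow, hL, h1lam, hlam2, h2a]
  have hΓne : Gamma α ≠ 0 := hΓ.ne'
  field_simp
end

section
/- Let g: (0,∞) → (0,∞) be a twice continuously differentiable probability density such that x² (log g(x))'' is constant on (0,∞), equal to some C ∈ ℝ. Then there exist constants K, D with g(x) = e^K x^{-C} e^{Dx}; integrability of g on (0,∞) forces C < 1 and D < 0, so that g is a Gamma density with shape α = 1 - C > 0 and rate λ = -D > 0. -/
open MeasureTheory Set

/-- A differentiable function on `Ioi 0` with zero derivative is constant. -/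
lemma const_on_Ioi_aux {ψ : ℝ → ℝ} (hd : DifferentiableOn ℝ ψ (Ioi 0))
    (h0 : ∀ x ∈ Ioi (0:ℝ), deriv ψ x = 0) :
    ∀ x ∈ Ioi (0:ℝ), ψ x = ψ 1 := by
  intro x hx
  refine (convex_Ioi (0:ℝ)).is_const_of_fderivWithin_eq_zero hd ?_ hx (mem_Ioi.2 one_pos)
  intro z hz
  rw [fderivWithin_of_isOpen isOpen_Ioi hz]
  ext
  simp [fderiv_eq_smul_deriv, h0 z hz]

theorem log_second_deriv_const_implies_gamma
    (g : ℝ → ℝ) (hgpos : ∀ x ∈ Ioi (0:ℝ), 0 < g x)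
    (hsmooth : ContDiffOn ℝ 2 g (Ioi 0))
    (hdens : ∫ x in Ioi (0:ℝ), g x = 1)
    (hint : IntegrableOn g (Ioi 0))
    (C : ℝ)
    (hC : ∀ x ∈ Ioi (0:ℝ),
      x ^ 2 * deriv (deriv (fun y => Real.log (g y))) x = C) :
    ∃ K D : ℝ, (∀ x ∈ Ioi (0:ℝ), g x = Real.exp K * x ^ (-C) * Real.exp (D * x))
      ∧ C < 1 ∧ D < 0
      ∧ Real.exp K = (-D) ^ (1 - C) / Real.Gamma (1 - C) := by
  set f : ℝ → ℝ := fun y => Real.log (g y) with hf_def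
  have hf2 : ContDiffOn ℝ 2 f (Ioi 0) :=
    hsmooth.log (fun x hx => (hgpos x hx).ne')
  have hu : ContDiffOn ℝ 1 (deriv f) (Ioi 0) :=
    hf2.deriv_of_isOpen isOpen_Ioi (by norm_num)
  have hudiff : ∀ x ∈ Ioi (0:ℝ), DifferentiableAt ℝ (deriv f) x := fun x hx =>
    ((hu.differentiableOn (by norm_num)).differentiableAt (isOpen_Ioi.mem_nhds hx))
  have hfdiff : ∀ x ∈ Ioi (0:ℝ), DifferentiableAt ℝ f x := fun x hx =>
    ((hf2.differentiableOn (by norm_num)).differentiableAt (isOpen_Ioi.mem_nhds hx))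
  have hC' : ∀ x ∈ Ioi (0:ℝ), deriv (deriv f) x = C / x ^ 2 := by
    intro x hx
    have hx0 : (x:ℝ) ≠ 0 := ne_of_gt hx
    rw [eq_div_iff (pow_ne_zero 2 hx0)]
    have := hC x hx
    linarith [this]
  -- ψ = f' + C/x has zero derivative
  set ψ : ℝ → ℝ := fun x => deriv f x + C * x⁻¹ with hψ_def
  have hψdiff : DifferentiableOn ℝ ψ (Ioi 0) := by
    intro x hx
    exact ((hudiff x hx).add
      (((differentiableAt_inv (ne_of_gt hx)).const_mul C))).differentiableWithinAt
  have hψ0 : ∀ x ∈ Ioi (0:ℝ), deriv ψ x = 0 := by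
    intro x hx
    have hx0 : (x:ℝ) ≠ 0 := ne_of_gt hx
    have hinv : DifferentiableAt ℝ (fun x : ℝ => C * x⁻¹) x :=
      (differentiableAt_inv hx0).const_mul C
    rw [hψ_def]
    rw [deriv_fun_add (hudiff x hx) hinv, hC' x hx,
      deriv_const_mul C (differentiableAt_inv hx0), deriv_inv]
    field_simp
    ring
  set D : ℝ := deriv f 1 + C with hD_def
  have hu_eq : ∀ x ∈ Ioi (0:ℝ), deriv f x = D - C * x⁻¹ := by
    intro x hx
    have := const_on_Ioi_aux hψdiff hψ0 x hx
    simp only [hψ_def] at this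
    rw [hD_def]
    simp at this
    linarith
  -- φ = f - (D x - C log x) has zero derivative
  set φ : ℝ → ℝ := fun x => f x - (D * x - C * Real.log x) with hφ_def
  have hφdiff : DifferentiableOn ℝ φ (Ioi 0) := by
    intro x hx
    have hx0 : (x:ℝ) ≠ 0 := ne_of_gt hx
    exact ((hfdiff x hx).sub
      (((differentiableAt_id.const_mul D)).sub
        ((Real.differentiableAt_log hx0).const_mul C))).differentiableWithinAt
  have hφ0 : ∀ x ∈ Ioi (0:ℝ), deriv φ x = 0 := by
    intro x hx
    have hx0 : (x:ℝ) ≠ 0 := ne_of_gt hx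
    have h1 : DifferentiableAt ℝ (fun x : ℝ => D * x) x := differentiableAt_id.const_mul D
    have h2 : DifferentiableAt ℝ (fun x : ℝ => C * Real.log x) x :=
      (Real.differentiableAt_log hx0).const_mul C
    have hlin : HasDerivAt (fun x : ℝ => D * x - C * Real.log x) (D - C * x⁻¹) x := by
      simpa using ((hasDerivAt_id x).const_mul D).fun_sub ((Real.hasDerivAt_log hx0).const_mul C)
    rw [hφ_def]
    rw [deriv_fun_sub (hfdiff x hx) hlin.differentiableAt, hlin.deriv, hu_eq x hx]
    ring
  set K : ℝ := f 1 - D with hK_def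
  have hf_eq : ∀ x ∈ Ioi (0:ℝ), f x = K + (-C) * Real.log x + D * x := by
    intro x hx
    have := const_on_Ioi_aux hφdiff hφ0 x hx
    simp only [hφ_def, Real.log_one] at this
    rw [hK_def]
    linarith [this]
  have hrep : ∀ x ∈ Ioi (0:ℝ), g x = Real.exp K * x ^ (-C) * Real.exp (D * x) := by
    intro x hx
    have hgx : g x = Real.exp (f x) := (Real.exp_log (hgpos x hx)).symm
    rw [hgx, hf_eq x hx, Real.exp_add, Real.exp_add,
      Real.rpow_def_of_pos (mem_Ioi.1 hx) (-C)]
    ring_nf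
  -- D < 0
  have hD : D < 0 := by
    by_contra h
    push_neg at h
    have hi2 : IntegrableOn (fun x : ℝ => x ^ (-C)) (Ioi 0) := by
      refine (hint.const_mul (Real.exp (-K))).mono' ?_ ?_
      · refine ContinuousOn.aestronglyMeasurable ?_ measurableSet_Ioi
        intro x hx
        exact (Real.continuousAt_rpow_const x (-C) (Or.inl (ne_of_gt hx))).continuousWithinAt
      · filter_upwards [ae_restrict_mem measurableSet_Ioi] with x hx
        have hx0 : (0:ℝ) < x := hx
        rw [Real.norm_eq_abs, abs_of_nonneg (by positivity), hrep x hx]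
        have h1 : (1:ℝ) ≤ Real.exp (D * x) := Real.one_le_exp (by positivity)
        have key : Real.exp (-K) * (Real.exp K * x ^ (-C) * Real.exp (D * x))
            = Real.exp (D * x) * x ^ (-C) := by
          calc Real.exp (-K) * (Real.exp K * x ^ (-C) * Real.exp (D * x))
              = (Real.exp (-K) * Real.exp K) * (Real.exp (D * x) * x ^ (-C)) := by ring
            _ = Real.exp (D * x) * x ^ (-C) := by rw [← Real.exp_add]; simp
        rw [key]
        nlinarith [Real.rpow_pos_of_pos hx0 (-C)]
    exact not_integrableOn_Ioi_rpow (-C) hi2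
  -- C < 1
  have hC1 : C < 1 := by
    have hi : IntegrableOn (fun x : ℝ => x ^ (-C)) (Ioo (0:ℝ) 1) := by
      have hg1 : IntegrableOn (fun x => Real.exp (-(K + D)) * g x) (Ioo (0:ℝ) 1) :=
        (hint.mono Ioo_subset_Ioi_self le_rfl).const_mul _
      refine hg1.mono' ?_ ?_
      · refine ContinuousOn.aestronglyMeasurable ?_ measurableSet_Ioo
        intro x hx
        exact (Real.continuousAt_rpow_const x (-C) (Or.inl (ne_of_gt hx.1))).continuousWithinAt
      · filter_upwards [ae_restrict_mem measurableSet_Ioo] with x hx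
        have hx0 : (0:ℝ) < x := hx.1
        rw [Real.norm_eq_abs, abs_of_nonneg (by positivity), hrep x hx.1]
        have hDx : D ≤ D * x := by nlinarith [hx.2]
        have h2 : Real.exp (-(K + D)) * (Real.exp K * x ^ (-C) * Real.exp (D * x))
            = Real.exp (D * x - D) * x ^ (-C) := by
          calc Real.exp (-(K + D)) * (Real.exp K * x ^ (-C) * Real.exp (D * x))
              = (Real.exp (-(K + D)) * Real.exp K * Real.exp (D * x)) * x ^ (-C) := by ring
            _ = Real.exp (-(K + D) + K + D * x) * x ^ (-C) := by
                rw [← Real.exp_add, ← Real.exp_add]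
            _ = Real.exp (D * x - D) * x ^ (-C) := by ring_nf
        rw [h2]
        have h3 : (1:ℝ) ≤ Real.exp (D * x - D) := Real.one_le_exp (by linarith)
        nlinarith [Real.rpow_pos_of_pos hx0 (-C)]
    rw [intervalIntegral.integrableOn_Ioo_rpow_iff zero_lt_one] at hi
    linarith
  -- the normalizing constant
  have hDpos : (0:ℝ) < -D := by linarith
  have hΓ : ∫ t : ℝ in Ioi 0, t ^ ((1 - C) - 1) * Real.exp (-(-D * t))
      = (1 / -D) ^ (1 - C) * Real.Gamma (1 - C) :=
    Real.integral_rpow_mul_exp_neg_mul_Ioi (by linarith) hDpos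
  have hint_eq : ∫ x in Ioi (0:ℝ), g x
      = Real.exp K * ((1 / -D) ^ (1 - C) * Real.Gamma (1 - C)) := by
    rw [← hΓ, ← MeasureTheory.integral_const_mul]
    refine setIntegral_congr_fun measurableSet_Ioi ?_
    intro x hx
    rw [hrep x hx]
    show Real.exp K * x ^ (-C) * Real.exp (D * x)
        = Real.exp K * (x ^ ((1 - C) - 1) * Real.exp (-(-D * x)))
    rw [show (1 - C) - 1 = -C from by ring, show -(-D * x) = D * x from by ring]
    ring
  have hΓpos : 0 < Real.Gamma (1 - C) := Real.Gamma_pos_of_pos (by linarith)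
  have hrpos : 0 < (-D : ℝ) ^ (1 - C) := Real.rpow_pos_of_pos hDpos _
  have hKval : Real.exp K = (-D) ^ (1 - C) / Real.Gamma (1 - C) := by
    have h1 : Real.exp K * ((1 / -D) ^ (1 - C) * Real.Gamma (1 - C)) = 1 := by
      rw [← hint_eq]; exact hdens
    rw [one_div, Real.inv_rpow hDpos.le] at h1
    rw [eq_div_iff hΓpos.ne']
    field_simp at h1
    linarith
  exact ⟨K, D, hrep, hC1, hD, hKval⟩
end

section
/- Let n ≥ 1 and p ∈ (0,1), and set E_n(p) = n p^n ∫₀^{1-p} dw/((1-w)^{n+1}(1+w)). Then (1-p^n)/(2-p) ≤ E_n(p) ≤ 1 - p^n. In particular, for X ~ Geometric(p) with Gini coefficient G = 1/(2-p), the expectation of the Gini estimator from a sample of size n satisfies -p^n G ≤ E[Ĝ] - G ≤ 1 - p^n - G. -/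
open MeasureTheory Set

lemma gini_key_integral (n : ℕ) (hn : 1 ≤ n) (p : ℝ) (hp : p ∈ Ioo (0:ℝ) 1) :
    (n : ℝ) * p ^ n * ∫ w in Ioo (0:ℝ) (1 - p), 1 / (1 - w) ^ (n + 1) = 1 - p ^ n := by
  obtain ⟨hp0, hp1⟩ := hp
  have ha : (0:ℝ) ≤ 1 - p := by linarith
  have h1 : ∫ w in Ioo (0:ℝ) (1 - p), 1 / (1 - w) ^ (n + 1)
      = ∫ w in (0:ℝ)..(1 - p), (1 - w) ^ (-(n + 1 : ℕ) : ℤ) := by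
    rw [← MeasureTheory.integral_Ioc_eq_integral_Ioo, ← intervalIntegral.integral_of_le ha]
    congr 1; ext w
    rw [zpow_neg, zpow_natCast, one_div]
  have h2 : (∫ w in (0:ℝ)..(1 - p), (1 - w) ^ (-(n + 1 : ℕ) : ℤ))
      = ∫ u in p..1, u ^ (-(n + 1 : ℕ) : ℤ) := by
    have := intervalIntegral.integral_comp_sub_left (a := (0:ℝ)) (b := 1 - p)
      (fun u => u ^ (-(n + 1 : ℕ) : ℤ)) 1
    simpa using this
  have h3 : (∫ u in p..1, u ^ (-(n + 1 : ℕ) : ℤ))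
      = ((1:ℝ) ^ ((-(n + 1 : ℕ) : ℤ) + 1) - p ^ ((-(n + 1 : ℕ) : ℤ) + 1))
        / ((-(n + 1 : ℕ) : ℤ) + 1) := by
    apply integral_zpow
    right
    constructor
    · omega
    · intro h
      rw [Set.mem_uIcc] at h
      rcases h with ⟨h, _⟩ | ⟨_, h⟩ <;> linarith
  rw [h1, h2, h3]
  have hpn : p ^ n ≠ 0 := pow_ne_zero _ (ne_of_gt hp0)
  have hne : ((-(n + 1 : ℕ) : ℤ) + 1) = -(n : ℤ) := by push_cast; ring
  rw [hne]
  have hn0 : (n : ℝ) ≠ 0 := by positivity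
  rw [one_zpow, zpow_neg, zpow_natCast]
  push_cast
  field_simp
  rw [show -((n:ℝ) + 1) + 1 = -(n:ℝ) by ring, div_neg, mul_div_cancel_left₀ _ hn0]; ring

theorem geometric_gini_expectation_bounds (n : ℕ) (hn : 1 ≤ n)
    (p : ℝ) (hp : p ∈ Ioo (0:ℝ) 1)
    (En : ℝ)
    (hEn : En = (n : ℝ) * p ^ n
        * ∫ w in Ioo (0:ℝ) (1 - p), 1 / ((1 - w) ^ (n + 1) * (1 + w))) :
    ((1 - p ^ n) / (2 - p) ≤ En ∧ En ≤ 1 - p ^ n)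
    ∧ (-(p ^ n) * (1 / (2 - p)) ≤ En - 1 / (2 - p)
        ∧ En - 1 / (2 - p) ≤ 1 - p ^ n - 1 / (2 - p)) := by
  obtain ⟨hp0, hp1⟩ := hp
  have ha : (0:ℝ) < 1 - p := by linarith
  -- continuity / integrability
  have hsub : Ioo (0:ℝ) (1 - p) ⊆ Icc (0:ℝ) (1 - p) := Ioo_subset_Icc_self
  have hgc : ContinuousOn (fun w : ℝ => 1 / (1 - w) ^ (n + 1)) (Icc (0:ℝ) (1 - p)) := by
    apply ContinuousOn.div continuousOn_const
    · fun_prop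
    · intro x hx
      exact pow_ne_zero _ (ne_of_gt (by have := hx.2; linarith : (0:ℝ) < 1 - x))
  have hfc : ContinuousOn (fun w : ℝ => 1 / ((1 - w) ^ (n + 1) * (1 + w)))
      (Icc (0:ℝ) (1 - p)) := by
    apply ContinuousOn.div continuousOn_const
    · fun_prop
    · intro x hx
      exact mul_ne_zero (pow_ne_zero _ (ne_of_gt (by have := hx.2; linarith : (0:ℝ) < 1 - x)))
        (ne_of_gt (by have := hx.1; linarith : (0:ℝ) < 1 + x))
  have hgi : IntegrableOn (fun w : ℝ => 1 / (1 - w) ^ (n + 1)) (Ioo (0:ℝ) (1 - p)) :=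
    (hgc.integrableOn_Icc).mono_set hsub
  have hfi : IntegrableOn (fun w : ℝ => 1 / ((1 - w) ^ (n + 1) * (1 + w)))
      (Ioo (0:ℝ) (1 - p)) := (hfc.integrableOn_Icc).mono_set hsub
  have key := gini_key_integral n hn p ⟨hp0, hp1⟩
  have hcoef : (0:ℝ) ≤ (n : ℝ) * p ^ n := by positivity
  have h2p : (0:ℝ) < 2 - p := by linarith
  -- upper bound
  have hup : (∫ w in Ioo (0:ℝ) (1 - p), 1 / ((1 - w) ^ (n + 1) * (1 + w)))
      ≤ ∫ w in Ioo (0:ℝ) (1 - p), 1 / (1 - w) ^ (n + 1) := by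
    apply setIntegral_mono_on hfi hgi measurableSet_Ioo
    intro w hw
    have h1 : p < 1 - w := by have := hw.2; linarith
    have hA : (0:ℝ) < (1 - w) ^ (n + 1) := pow_pos (by linarith) _
    have h2 : (0:ℝ) < 1 + w := by have := hw.1; linarith
    apply one_div_le_one_div_of_le hA
    nlinarith [mul_nonneg hA.le hw.1.le]
  -- lower bound
  have hlow : (∫ w in Ioo (0:ℝ) (1 - p), (1 / (2 - p)) * (1 / (1 - w) ^ (n + 1)))
      ≤ ∫ w in Ioo (0:ℝ) (1 - p), 1 / ((1 - w) ^ (n + 1) * (1 + w)) := by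
    apply setIntegral_mono_on (hgi.const_mul _) hfi measurableSet_Ioo
    intro w hw
    have h1 : p < 1 - w := by have := hw.2; linarith
    have hA : (0:ℝ) < (1 - w) ^ (n + 1) := pow_pos (by linarith) _
    have h2 : (0:ℝ) < 1 + w := by have := hw.1; linarith
    have h3 : 1 + w ≤ 2 - p := by have := hw.2; linarith
    rw [show (1 / (2 - p)) * (1 / (1 - w) ^ (n + 1))
        = 1 / ((1 - w) ^ (n + 1) * (2 - p)) by rw [one_div_mul_one_div, mul_comm]]
    apply one_div_le_one_div_of_le (by positivity)
    nlinarith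
  have hlow' : (∫ w in Ioo (0:ℝ) (1 - p), (1 / (2 - p)) * (1 / (1 - w) ^ (n + 1)))
      = (1 / (2 - p)) * ∫ w in Ioo (0:ℝ) (1 - p), 1 / (1 - w) ^ (n + 1) :=
    integral_const_mul _ _
  have hmain : (1 - p ^ n) / (2 - p) ≤ En ∧ En ≤ 1 - p ^ n := by
    constructor
    · have := mul_le_mul_of_nonneg_left hlow hcoef
      rw [hlow', ← mul_assoc] at this
      calc (1 - p ^ n) / (2 - p)
          = (n : ℝ) * p ^ n * (1 / (2 - p))
            * ∫ w in Ioo (0:ℝ) (1 - p), 1 / (1 - w) ^ (n + 1) := by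
            rw [show (n : ℝ) * p ^ n * (1 / (2 - p))
                * (∫ w in Ioo (0:ℝ) (1 - p), 1 / (1 - w) ^ (n + 1))
                = ((n : ℝ) * p ^ n * ∫ w in Ioo (0:ℝ) (1 - p), 1 / (1 - w) ^ (n + 1))
                  * (1 / (2 - p)) by ring, key]
            field_simp
        _ ≤ En := by
            rw [hEn]
            calc (n : ℝ) * p ^ n * (1 / (2 - p))
                * ∫ w in Ioo (0:ℝ) (1 - p), 1 / (1 - w) ^ (n + 1)
                = (n : ℝ) * p ^ n
                  * ((1 / (2 - p)) * ∫ w in Ioo (0:ℝ) (1 - p), 1 / (1 - w) ^ (n + 1)) := by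
                  ring
              _ ≤ _ := by
                  apply mul_le_mul_of_nonneg_left _ hcoef
                  rw [← hlow']; exact hlow
    · rw [hEn, ← key]
      exact mul_le_mul_of_nonneg_left hup hcoef
  refine ⟨hmain, ?_, ?_⟩
  · have h := hmain.1
    have heq : (1 - p ^ n) / (2 - p) = 1 / (2 - p) - p ^ n * (1 / (2 - p)) := by ring
    linarith [heq ▸ h]
  · linarith [hmain.2]
end
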